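/- arXiv:2106.04037 — 7 statements merged into one kernel-verified Lean document; each statement's English description precedes it below -/
import Mathlib

section
/- For N = 2m with m ≥ 3, there exists a graph G on N vertices with exactly N²/4 + N/2 edges such that for every subset S of N/2 vertices, the induced subgraph on the complement V \ S is connected. -/
open Classical SimpleGraph Finset

/-- cyclic successor on `{0, ..., m-1}` -/
def nsucc (m i : ℕ) : ℕ := if i + 1 = m then 0 else i + 1

lemma nsucc_lt {m i : ℕ} (hi : i < m) : nsucc m i < m := by
  unfold nsucc; split_ifs <;> omega

/-- Two cliques `{0,...,m-1}`, `{m,...,2m-1}`, plus cross edges `i ~ m+i` and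
`i ~ m + nsucc m i`. -/
def myGraph (m : ℕ) : SimpleGraph (Fin (2 * m)) where
  Adj v w := v ≠ w ∧
    ((v.val < m ∧ w.val < m) ∨ (m ≤ v.val ∧ m ≤ w.val) ∨
     (v.val < m ∧ (w.val = m + v.val ∨ w.val = m + nsucc m v.val)) ∨
     (w.val < m ∧ (v.val = m + w.val ∨ v.val = m + nsucc m w.val)))
  symm := by
    constructor
    rintro v w ⟨h1, h2⟩
    exact ⟨h1.symm, by tauto⟩
  loopless := ⟨fun v h => h.1 rfl⟩

lemma myGraph_adj {m : ℕ} {v w : Fin (2 * m)} : (myGraph m).Adj v w ↔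
    v ≠ w ∧
    ((v.val < m ∧ w.val < m) ∨ (m ≤ v.val ∧ m ≤ w.val) ∨
     (v.val < m ∧ (w.val = m + v.val ∨ w.val = m + nsucc m v.val)) ∨
     (w.val < m ∧ (v.val = m + w.val ∨ v.val = m + nsucc m w.val))) := Iff.rfl

noncomputable instance (m : ℕ) : DecidableRel (myGraph m).Adj := fun _ _ =>
  Classical.dec _

def npred (m i : ℕ) : ℕ := if i = 0 then m - 1 else i - 1

lemma cardA {m : ℕ} : (univ.filter (fun w : Fin (2 * m) => w.val < m)).card = m := by
  have h : (univ.filter (fun w : Fin (2 * m) => w.val < m)).image Fin.val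
      = Finset.range m := by
    ext j
    simp only [mem_image, mem_filter, mem_univ, true_and, mem_range]
    constructor
    · rintro ⟨w, hw, rfl⟩; exact hw
    · intro hj; exact ⟨⟨j, by omega⟩, hj, rfl⟩
  have h2 := Finset.card_image_of_injective
    (univ.filter (fun w : Fin (2 * m) => w.val < m)) Fin.val_injective
  rw [h, card_range] at h2
  omega

lemma cardB {m : ℕ} : (univ.filter (fun w : Fin (2 * m) => m ≤ w.val)).card = m := by
  have h1 : (univ.filter (fun w : Fin (2 * m) => m ≤ w.val))
      = (univ.filter (fun w : Fin (2 * m) => w.val < m))ᶜ := by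
    ext w; simp [not_lt]
  rw [h1, card_compl, cardA, Fintype.card_fin]
  omega

lemma nbhdA {m : ℕ} (hm : 3 ≤ m) (v : Fin (2 * m)) (hv : v.val < m) :
    (myGraph m).neighborFinset v =
      ((univ.filter (fun w : Fin (2 * m) => w.val < m)).erase v) ∪
        {⟨m + v.val, by omega⟩, ⟨m + nsucc m v.val, by have := nsucc_lt hv; omega⟩} := by
  ext w
  simp only [mem_neighborFinset, myGraph_adj, mem_union, mem_erase, mem_filter, mem_univ,
    true_and, mem_insert, mem_singleton, Fin.ext_iff, ne_eq]
  unfold nsucc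
  split_ifs <;> omega

lemma nbhdB {m : ℕ} (hm : 3 ≤ m) (v : Fin (2 * m)) (hv : m ≤ v.val) :
    (myGraph m).neighborFinset v =
      ((univ.filter (fun w : Fin (2 * m) => m ≤ w.val)).erase v) ∪
        {⟨v.val - m, by omega⟩, ⟨npred m (v.val - m), by unfold npred; split_ifs <;> omega⟩} := by
  ext w
  simp only [mem_neighborFinset, myGraph_adj, mem_union, mem_erase, mem_filter, mem_univ,
    true_and, mem_insert, mem_singleton, Fin.ext_iff, ne_eq]
  unfold nsucc npred
  split_ifs <;> omega

lemma degA {m : ℕ} (hm : 3 ≤ m) (v : Fin (2 * m)) (hv : v.val < m) :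
    (myGraph m).degree v = m + 1 := by
  show ((myGraph m).neighborFinset v).card = m + 1
  rw [nbhdA hm v hv]
  have hdisj : Disjoint ((univ.filter (fun w : Fin (2 * m) => w.val < m)).erase v)
      ({⟨m + v.val, by omega⟩, ⟨m + nsucc m v.val, by have := nsucc_lt hv; omega⟩} :
        Finset (Fin (2 * m))) := by
    rw [Finset.disjoint_left]
    intro a ha hb
    have h1 : a.val < m := (mem_filter.mp (mem_of_mem_erase ha)).2
    simp only [mem_insert, mem_singleton, Fin.ext_iff] at hb
    omega
  rw [card_union_of_disjoint hdisj, card_erase_of_mem (by simp [hv]), cardA]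
  have hne : (⟨m + v.val, by omega⟩ : Fin (2 * m)) ≠
      ⟨m + nsucc m v.val, by have := nsucc_lt hv; omega⟩ := by
    simp only [ne_eq, Fin.ext_iff]
    unfold nsucc; split_ifs <;> omega
  rw [card_insert_of_notMem (by simpa using hne), card_singleton]
  omega

lemma degB {m : ℕ} (hm : 3 ≤ m) (v : Fin (2 * m)) (hv : m ≤ v.val) :
    (myGraph m).degree v = m + 1 := by
  show ((myGraph m).neighborFinset v).card = m + 1
  rw [nbhdB hm v hv]
  have hdisj : Disjoint ((univ.filter (fun w : Fin (2 * m) => m ≤ w.val)).erase v)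
      ({⟨v.val - m, by omega⟩, ⟨npred m (v.val - m), by unfold npred; split_ifs <;> omega⟩} :
        Finset (Fin (2 * m))) := by
    rw [Finset.disjoint_left]
    intro a ha hb
    have h1 : m ≤ a.val := (mem_filter.mp (mem_of_mem_erase ha)).2
    simp only [mem_insert, mem_singleton, Fin.ext_iff] at hb
    unfold npred at hb
    split_ifs at hb <;> omega
  rw [card_union_of_disjoint hdisj, card_erase_of_mem (by simp [hv]), cardB]
  have hne : (⟨v.val - m, by omega⟩ : Fin (2 * m)) ≠
      ⟨npred m (v.val - m), by unfold npred; split_ifs <;> omega⟩ := by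
    simp only [ne_eq, Fin.ext_iff]
    unfold npred; split_ifs <;> omega
  rw [card_insert_of_notMem (by simpa using hne), card_singleton]
  omega

lemma edgeCount {m : ℕ} (hm : 3 ≤ m) : (myGraph m).edgeFinset.card = m * m + m := by
  have hdeg : ∀ v : Fin (2 * m), (myGraph m).degree v = m + 1 := by
    intro v
    rcases lt_or_ge v.val m with h | h
    · exact degA hm v h
    · exact degB hm v h
  have hsum : ∑ v : Fin (2 * m), (myGraph m).degree v = 2 * (m * m + m) := by
    rw [Finset.sum_congr rfl (fun v _ => hdeg v), Finset.sum_const, card_univ,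
      Fintype.card_fin, smul_eq_mul]
    ring
  have h2 := SimpleGraph.sum_degrees_eq_twice_card_edges (myGraph m)
  omega

lemma closure_full {m : ℕ} (hm : 0 < m) (I : Finset ℕ) (hsub : I ⊆ Finset.range m)
    (hne : I.Nonempty) (hcl : ∀ i ∈ I, nsucc m i ∈ I) : I = Finset.range m := by
  have h0 : (0 : ℕ) ∈ I := by
    obtain ⟨i0, hi0⟩ := hne
    have key : ∀ t i, i ∈ I → i + t = m → 0 ∈ I := by
      intro t
      induction t with
      | zero =>
        intro i hi h
        have := mem_range.mp (hsub hi); omega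
      | succ s ih =>
        intro i hi h
        by_cases hc : i + 1 = m
        · have h2 := hcl i hi
          unfold nsucc at h2; rw [if_pos hc] at h2; exact h2
        · have h2 := hcl i hi
          unfold nsucc at h2; rw [if_neg hc] at h2
          exact ih (i + 1) h2 (by omega)
    have hi0m : i0 < m := mem_range.mp (hsub hi0)
    exact key (m - i0) i0 hi0 (by omega)
  have hall : ∀ j, j < m → j ∈ I := by
    intro j
    induction j with
    | zero => intro _; exact h0
    | succ k ih =>
      intro hk
      have hkI := ih (by omega)
      have h2 := hcl k hkI
      unfold nsucc at h2
      rw [if_neg (by omega)] at h2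
      exact h2
  exact Finset.Subset.antisymm hsub (fun j hj => hall j (mem_range.mp hj))

lemma crossEdge {m : ℕ} (hm : 3 ≤ m) (Tf : Finset (Fin (2 * m))) (hT : Tf.card = m)
    (x0 : Fin (2 * m)) (hx0 : x0 ∈ Tf) (hx0A : x0.val < m)
    (y0 : Fin (2 * m)) (hy0 : y0 ∈ Tf) (hy0B : m ≤ y0.val) :
    ∃ x ∈ Tf, ∃ y ∈ Tf, x.val < m ∧ m ≤ y.val ∧ (myGraph m).Adj x y := by
  classical
  set X := Tf.filter (fun w => w.val < m) with hXdef
  set Y := Tf.filter (fun w => m ≤ w.val) with hYdef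
  have hYalt : Y = Tf.filter (fun w => ¬ w.val < m) := by
    rw [hYdef]; apply filter_congr; intro w _; simp [not_lt]
  have hXY : X.card + Y.card = m := by
    rw [hXdef, hYalt, Finset.card_filter_add_card_filter_not, hT]
  have hx0X : x0 ∈ X := mem_filter.mpr ⟨hx0, hx0A⟩
  have hy0Y : y0 ∈ Y := mem_filter.mpr ⟨hy0, hy0B⟩
  have hXc : 1 ≤ X.card := card_pos.mpr ⟨x0, hx0X⟩
  have hYc : 1 ≤ Y.card := card_pos.mpr ⟨y0, hy0Y⟩
  set I := X.image Fin.val with hIdef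
  have hI : I.card = X.card := Finset.card_image_of_injective _ Fin.val_injective
  have hIsub : I ⊆ range m := by
    intro j hj
    obtain ⟨w, hw, rfl⟩ := mem_image.mp hj
    exact mem_range.mpr (mem_filter.mp hw).2
  set J := I ∪ I.image (nsucc m) with hJdef
  have hJsub : J ⊆ range m := by
    apply union_subset hIsub
    intro j hj
    obtain ⟨i, hi, rfl⟩ := mem_image.mp hj
    exact mem_range.mpr (nsucc_lt (mem_range.mp (hIsub hi)))
  have hIJ : I ⊆ J := subset_union_left
  have hJcard : X.card + 1 ≤ J.card := by
    by_contra hcon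
    have hle : I.card ≤ J.card := card_le_card hIJ
    have hJI : I = J := eq_of_subset_of_card_le hIJ (by omega)
    have hclosed : ∀ i ∈ I, nsucc m i ∈ I := by
      intro i hi
      have h2 : nsucc m i ∈ J := subset_union_right (mem_image_of_mem _ hi)
      rwa [← hJI] at h2
    have hfull := closure_full (by omega) I hIsub ⟨x0.val, mem_image_of_mem _ hx0X⟩ hclosed
    have : I.card = m := by rw [hfull, card_range]
    omega
  set K := Y.image (fun w : Fin (2 * m) => w.val - m) with hKdef
  have hK : K.card = Y.card := by
    apply Finset.card_image_of_injOn
    intro a ha b hb hab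
    have h1 : m ≤ a.val := (mem_filter.mp ha).2
    have h2 : m ≤ b.val := (mem_filter.mp hb).2
    have hab' : a.val - m = b.val - m := hab
    exact Fin.ext (by omega)
  have hKsub : K ⊆ range m := by
    intro j hj
    obtain ⟨w, _, rfl⟩ := mem_image.mp hj
    have := w.isLt
    exact mem_range.mpr (by omega)
  have hmeet : ¬ Disjoint J K := by
    intro hd
    have hcu := card_union_of_disjoint hd
    have hsub2 : J ∪ K ⊆ range m := union_subset hJsub hKsub
    have hle := card_le_card hsub2
    rw [card_range, hcu] at hle
    omega
  obtain ⟨j, hjJ, hjK⟩ := Finset.not_disjoint_iff.mp hmeet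
  obtain ⟨y, hyY, hyj⟩ := mem_image.mp hjK
  have hyB : m ≤ y.val := (mem_filter.mp hyY).2
  have hyj' : y.val - m = j := hyj
  have hyval : y.val = m + j := by omega
  rcases mem_union.mp hjJ with hjI | hjI'
  · obtain ⟨x, hxX, hxj⟩ := mem_image.mp hjI
    have hxA : x.val < m := (mem_filter.mp hxX).2
    refine ⟨x, (mem_filter.mp hxX).1, y, (mem_filter.mp hyY).1, hxA, hyB, ?_, ?_⟩
    · intro h
      rw [h] at hxA; omega
    · exact Or.inr (Or.inr (Or.inl ⟨hxA, Or.inl (by omega)⟩))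
  · obtain ⟨i, hiI, hij⟩ := mem_image.mp hjI'
    obtain ⟨x, hxX, rfl⟩ := mem_image.mp hiI
    have hxA : x.val < m := (mem_filter.mp hxX).2
    refine ⟨x, (mem_filter.mp hxX).1, y, (mem_filter.mp hyY).1, hxA, hyB, ?_, ?_⟩
    · intro h
      rw [h] at hxA; omega
    · exact Or.inr (Or.inr (Or.inl ⟨hxA, Or.inr (by rw [hyval, hij])⟩))

/-- For `N = 2m` with `m ≥ 3`, there exists a graph on `N` vertices with
exactly `N²/4 + N/2` edges such that removing any `N/2` vertices leaves a connected
induced subgraph. -/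
theorem stmt3 (N m : ℕ) (hm : 3 ≤ m) (hNm : N = 2 * m) :
    ∃ G : SimpleGraph (Fin N), G.edgeSet.ncard = N ^ 2 / 4 + N / 2 ∧
      ∀ S : Finset (Fin N), S.card = N / 2 →
        (G.induce ((S : Set (Fin N))ᶜ)).Connected := by
  subst hNm
  refine ⟨myGraph m, ?_, ?_⟩
  · have h1 := edgeCount hm
    rw [← SimpleGraph.coe_edgeFinset, Set.ncard_coe_finset, h1]
    have h2 : (2 * m) ^ 2 = 4 * (m * m) := by ring
    omega
  · intro S hS
    have hm' : 2 * m / 2 = m := by omega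
    rw [hm'] at hS
    set Tf := Sᶜ with hTfdef
    have hTfcard : Tf.card = m := by
      rw [hTfdef, card_compl, Fintype.card_fin, hS]; omega
    have hmemT : ∀ v : Fin (2 * m), v ∈ ((S : Set (Fin (2 * m)))ᶜ) ↔ v ∈ Tf := by
      intro v
      simp [hTfdef, Set.mem_compl_iff, Finset.mem_coe, Finset.mem_compl]
    have hTfne : Tf.Nonempty := by
      rw [← card_pos, hTfcard]; omega
    obtain ⟨v0, hv0⟩ := hTfne
    haveI hne : Nonempty ((S : Set (Fin (2 * m)))ᶜ : Set (Fin (2 * m))) :=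
      ⟨⟨v0, (hmemT v0).mpr hv0⟩⟩
    have same : ∀ a b : ((S : Set (Fin (2 * m)))ᶜ : Set (Fin (2 * m))),
        ((a : Fin (2 * m)).val < m ↔ (b : Fin (2 * m)).val < m) →
        ((myGraph m).induce ((S : Set (Fin (2 * m)))ᶜ)).Reachable a b := by
      intro a b hside
      by_cases hab : a = b
      · rw [hab]
      · apply SimpleGraph.Adj.reachable
        show (myGraph m).Adj ↑a ↑b
        refine ⟨fun h => hab (Subtype.ext h), ?_⟩
        rcases lt_or_ge (a : Fin (2 * m)).val m with h | h
        · exact Or.inl ⟨h, hside.mp h⟩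
        · refine Or.inr (Or.inl ⟨h, ?_⟩)
          by_contra hb
          exact absurd h (not_le.mpr (hside.mpr (by omega)))
    have cross : ∀ a b : ((S : Set (Fin (2 * m)))ᶜ : Set (Fin (2 * m))),
        (a : Fin (2 * m)).val < m → m ≤ (b : Fin (2 * m)).val →
        ((myGraph m).induce ((S : Set (Fin (2 * m)))ᶜ)).Reachable a b := by
      intro a b ha hb
      obtain ⟨x, hxT, y, hyT, hxA, hyB, hadj⟩ :=
        crossEdge hm Tf hTfcard ↑a ((hmemT _).mp a.prop) ha ↑b ((hmemT _).mp b.prop) hb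
      set xs : ((S : Set (Fin (2 * m)))ᶜ : Set (Fin (2 * m))) := ⟨x, (hmemT x).mpr hxT⟩
      set ys : ((S : Set (Fin (2 * m)))ᶜ : Set (Fin (2 * m))) := ⟨y, (hmemT y).mpr hyT⟩
      have r1 := same a xs (by simp [xs, ha, hxA])
      have r2 : ((myGraph m).induce ((S : Set (Fin (2 * m)))ᶜ)).Reachable xs ys :=
        SimpleGraph.Adj.reachable (by exact hadj)
      have r3 := same ys b (by simp [ys]; omega)
      exact (r1.trans r2).trans r3
    constructor
    intro a b
    rcases lt_or_ge (a : Fin (2 * m)).val m with ha | ha <;>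
      rcases lt_or_ge (b : Fin (2 * m)).val m with hb | hb
    · exact same a b (by omega)
    · exact cross a b ha hb
    · exact (cross b a hb ha).symm
    · exact same a b (by omega)
end

section
/- Let G be a graph on N vertices (N even, N ≥ 6) consisting of two cliques A and B each of size N/2, together with cross edges such that: every vertex has at least two neighbors in the opposite clique, and for every nonempty set T ⊆ A with |T| < N/2, the set of B-neighbors of T is not contained in any set of |T| vertices of B (and symmetrically for T ⊆ B). Then for every set S of N/2 vertices, G minus S is connected. -/
open Classical SimpleGraph

/-- Two cliques `A`, `B` of size `N/2` each, partitioning the vertex set,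
with cross edges so that every vertex has at least two neighbors in the opposite clique
and no nonempty `T ⊆ A` with `|T| < N/2` has all its `B`-neighbors inside a set of `|T|`
vertices of `B` (and symmetrically).  Then removing any `N/2` vertices leaves the graph
connected. -/
theorem stmt4 {V : Type*} [Fintype V] [DecidableEq V] (G : SimpleGraph V) (N : ℕ)
    (hN : Even N) (h6 : 6 ≤ N) (hcard : Fintype.card V = N)
    (A B : Finset V) (hAB : Disjoint A B) (hunion : A ∪ B = Finset.univ)
    (hA : A.card = N / 2) (hB : B.card = N / 2)
    (hcliqueA : ∀ a ∈ A, ∀ a' ∈ A, a ≠ a' → G.Adj a a')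
    (hcliqueB : ∀ b ∈ B, ∀ b' ∈ B, b ≠ b' → G.Adj b b')
    (hdegA : ∀ a ∈ A, 2 ≤ (B.filter (fun b => G.Adj a b)).card)
    (hdegB : ∀ b ∈ B, 2 ≤ (A.filter (fun a => G.Adj b a)).card)
    (hexpA : ∀ T ⊆ A, T.Nonempty → T.card < N / 2 →
      ∀ U ⊆ B, U.card = T.card →
        ¬ (B.filter (fun b => ∃ a ∈ T, G.Adj a b)) ⊆ U)
    (hexpB : ∀ T ⊆ B, T.Nonempty → T.card < N / 2 →
      ∀ U ⊆ A, U.card = T.card →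
        ¬ (A.filter (fun a => ∃ b ∈ T, G.Adj b a)) ⊆ U) :
    ∀ S : Finset V, S.card = N / 2 → (G.induce ((S : Set V)ᶜ)).Connected := by
  intro S hS
  classical
  set C : Set V := (S : Set V)ᶜ with hC
  have hmemC : ∀ x : V, x ∉ S → x ∈ C := by
    intro x hx; simp [hC, hx]
  have hmemAB : ∀ v : V, v ∈ A ∨ v ∈ B := by
    intro v
    have : v ∈ A ∪ B := by rw [hunion]; exact Finset.mem_univ v
    exact Finset.mem_union.mp this
  -- nonempty
  have hcompl_card : Sᶜ.card = N - N / 2 := by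
    rw [Finset.card_compl, hS, hcard]
  have hne : Nonempty C := by
    have h3 : 0 < Sᶜ.card := by omega
    obtain ⟨x, hx⟩ := Finset.card_pos.mp h3
    exact ⟨⟨x, hmemC x (Finset.mem_compl.mp hx)⟩⟩
  -- adjacency lifting
  have hadj : ∀ x y : C, G.Adj x.1 y.1 → (G.induce C).Reachable x y := by
    intro x y h
    exact SimpleGraph.Adj.reachable (by simpa using h)
  have hreachA : ∀ x y : C, x.1 ∈ A → y.1 ∈ A → (G.induce C).Reachable x y := by
    intro x y hx hy
    by_cases hxy : x = y
    · rw [hxy]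
    · exact hadj x y (hcliqueA _ hx _ hy (fun h => hxy (Subtype.ext h)))
  have hreachB : ∀ x y : C, x.1 ∈ B → y.1 ∈ B → (G.induce C).Reachable x y := by
    intro x y hx hy
    by_cases hxy : x = y
    · rw [hxy]
    · exact hadj x y (hcliqueB _ hx _ hy (fun h => hxy (Subtype.ext h)))
  -- card facts
  have hSsplit : (S ∩ A).card + (S ∩ B).card = N / 2 := by
    have h1 : S ∩ A ∪ S ∩ B = S := by
      rw [← Finset.inter_union_distrib_left, hunion, Finset.inter_univ]
    have h2 : Disjoint (S ∩ A) (S ∩ B) :=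
      (hAB.mono Finset.inter_subset_right Finset.inter_subset_right)
    have h3 := Finset.card_union_of_disjoint h2
    rw [h1, hS] at h3
    omega
  have hAsplit : (A ∩ S).card + (A \ S).card = N / 2 := by
    rw [Finset.card_inter_add_card_sdiff, hA]
  have hBsplit : (B ∩ S).card + (B \ S).card = N / 2 := by
    rw [Finset.card_inter_add_card_sdiff, hB]
  -- cross edge when both sides survive
  have hcross : (A \ S).Nonempty → (B \ S).Nonempty →
      ∃ a ∈ A \ S, ∃ b ∈ B \ S, G.Adj a b := by
    intro hA' hB'
    have hAScard : 0 < (A ∩ S).card := by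
      rcases Nat.eq_zero_or_pos (A ∩ S).card with h0 | h
      · exfalso
        have hSB : S ⊆ B := by
          intro v hv
          rcases hmemAB v with hvA | hvB
          · exfalso
            have : v ∈ A ∩ S := Finset.mem_inter.mpr ⟨hvA, hv⟩
            simp [Finset.card_eq_zero.mp h0] at this
          · exact hvB
        have : S = B := Finset.eq_of_subset_of_card_le hSB (by rw [hS, hB])
        obtain ⟨b, hb⟩ := hB'
        rw [Finset.mem_sdiff, this] at hb
        exact hb.2 hb.1
      · exact h
    have hTcard : (A \ S).card < N / 2 := by omega
    have hUcard : (S ∩ B).card = (A \ S).card := by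
      have : (A ∩ S).card = (S ∩ A).card := by rw [Finset.inter_comm]
      omega
    have := hexpA (A \ S) (Finset.sdiff_subset) hA' hTcard (S ∩ B)
      Finset.inter_subset_right hUcard
    rw [Finset.not_subset] at this
    obtain ⟨b, hb1, hb2⟩ := this
    rw [Finset.mem_filter] at hb1
    obtain ⟨hbB, a, ha, hadj'⟩ := hb1
    refine ⟨a, ha, b, ?_, hadj'⟩
    rw [Finset.mem_sdiff]
    refine ⟨hbB, fun hbS => hb2 (Finset.mem_inter.mpr ⟨hbS, hbB⟩)⟩
  rw [SimpleGraph.connected_iff]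
  refine ⟨fun x y => ?_, hne⟩
  have hx' : x.1 ∉ S := fun h => x.2 (Finset.mem_coe.mpr h)
  have hy' : y.1 ∉ S := fun h => y.2 (Finset.mem_coe.mpr h)
  rcases hmemAB x.1 with hxA | hxB <;> rcases hmemAB y.1 with hyA | hyB
  · exact hreachA x y hxA hyA
  · -- x ∈ A, y ∈ B
    obtain ⟨a, ha, b, hb, hab⟩ := hcross ⟨x.1, Finset.mem_sdiff.mpr ⟨hxA, hx'⟩⟩
      ⟨y.1, Finset.mem_sdiff.mpr ⟨hyB, hy'⟩⟩
    rw [Finset.mem_sdiff] at ha hb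
    have ra := hreachA x ⟨a, hmemC a ha.2⟩ hxA ha.1
    have rab := hadj ⟨a, hmemC a ha.2⟩ ⟨b, hmemC b hb.2⟩ hab
    have rb := hreachB ⟨b, hmemC b hb.2⟩ y hb.1 hyB
    exact (ra.trans rab).trans rb
  · obtain ⟨a, ha, b, hb, hab⟩ := hcross ⟨y.1, Finset.mem_sdiff.mpr ⟨hyA, hy'⟩⟩
      ⟨x.1, Finset.mem_sdiff.mpr ⟨hxB, hx'⟩⟩
    rw [Finset.mem_sdiff] at ha hb
    have rb := hreachB x ⟨b, hmemC b hb.2⟩ hxB hb.1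
    have rba := hadj ⟨b, hmemC b hb.2⟩ ⟨a, hmemC a ha.2⟩ hab.symm
    have ra := hreachA ⟨a, hmemC a ha.2⟩ y ha.1 hyA
    exact (rb.trans rba).trans ra
  · exact hreachB x y hxB hyB
end

section
/- Let N ≥ 4 be even and let d = N_f + 1 be even with d < N. The circulant graph C_N(1, ..., d/2) (each vertex adjacent to the d/2 nearest vertices on each side of an N-cycle) is N_f-robust: removing any N_f = d - 1 vertices leaves a connected graph. -/
open Classical SimpleGraph

/-- Cyclic distance on `ZMod N`. -/
def cycDist (N : ℕ) (i j : ZMod N) : ℕ := min (i - j).val (j - i).val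

/-- The circulant graph `C_N(1, …, s)` on `ZMod N`. -/
def circulant (N s : ℕ) : SimpleGraph (ZMod N) where
  Adj i j := i ≠ j ∧ cycDist N i j ≤ s
  symm := by
    constructor
    intro i j ⟨h1, h2⟩
    exact ⟨h1.symm, by rwa [cycDist, min_comm]⟩
  loopless := by constructor; intro i h; exact h.1 rfl

def blockedF {N : ℕ} (s : ℕ) (S : Finset (ZMod N)) (u v : ZMod N) : Prop :=
  ∃ t : ℕ, t + s < (v - u).val ∧ ∀ j, 1 ≤ j → j ≤ s → u + ((t + j : ℕ) : ZMod N) ∈ S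
def blockedB {N : ℕ} (s : ℕ) (S : Finset (ZMod N)) (u v : ZMod N) : Prop :=
  ∃ t : ℕ, t + s < (u - v).val ∧ ∀ j, 1 ≤ j → j ≤ s → u - ((t + j : ℕ) : ZMod N) ∈ S
lemma natcast_ne_zero {N j : ℕ} (hj1 : 1 ≤ j) (hjN : j < N) : (j : ZMod N) ≠ 0 := by
  haveI : NeZero N := ⟨by omega⟩
  intro h
  have h2 := (ZMod.natCast_eq_zero_iff j N).mp h
  have := Nat.le_of_dvd (by omega) h2
  omega
lemma circ_adjF {N s : ℕ} (h2s : 2 * s < N) {j : ℕ} (hj1 : 1 ≤ j) (hjs : j ≤ s)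
    (u : ZMod N) : (circulant N s).Adj u (u + (j : ZMod N)) := by
  have hjN : j < N := by omega
  refine ⟨?_, ?_⟩
  · intro h
    exact natcast_ne_zero hj1 hjN (add_eq_left.mp h.symm)
  · refine le_trans (min_le_right _ _) ?_
    rw [add_sub_cancel_left, ZMod.val_cast_of_lt hjN]
    exact hjs
lemma circ_adjB {N s : ℕ} (h2s : 2 * s < N) {j : ℕ} (hj1 : 1 ≤ j) (hjs : j ≤ s)
    (u : ZMod N) : (circulant N s).Adj u (u - (j : ZMod N)) := by
  have hjN : j < N := by omega
  refine ⟨?_, ?_⟩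
  · intro h
    apply natcast_ne_zero hj1 hjN
    have : u - (j : ZMod N) - u = 0 := by rw [← h]; ring
    rw [sub_sub_cancel_left, neg_eq_zero] at this
    exact this
  · refine le_trans (min_le_left _ _) ?_
    rw [sub_sub_cancel, ZMod.val_cast_of_lt hjN]
    exact hjs

lemma reachF {N s : ℕ} [NeZero N] (S : Finset (ZMod N)) (h2s : 2 * s < N) (hs1 : 1 ≤ s) :
    ∀ k : ℕ, ∀ u v : ZMod N, ∀ hu : u ∈ ((S : Set (ZMod N))ᶜ), ∀ hv : v ∈ ((S : Set (ZMod N))ᶜ),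
      (v - u).val = k → ¬ blockedF s S u v →
      ((circulant N s).induce ((S : Set (ZMod N))ᶜ)).Reachable ⟨u, hu⟩ ⟨v, hv⟩ := by
  intro k
  induction k using Nat.strong_induction_on with
  | _ k ih =>
    intro u v hu hv hk hnb
    have hvalN : (v - u).val < N := ZMod.val_lt _
    rcases Nat.lt_or_ge s k with hks | hks
    · -- k > s : hop
      unfold blockedF at hnb
      push_neg at hnb
      obtain ⟨j, hj1, hjs, hjS⟩ := hnb 0 (by omega)
      simp only [Nat.zero_add] at hjS
      set u' : ZMod N := u + ((j : ℕ) : ZMod N) with hu'def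
      have hu' : u' ∈ ((S : Set (ZMod N))ᶜ) := by simpa using hjS
      have hadj : ((circulant N s).induce ((S : Set (ZMod N))ᶜ)).Adj ⟨u, hu⟩ ⟨u', hu'⟩ :=
        circ_adjF h2s hj1 hjs u
      have hvu : v - u = ((k : ℕ) : ZMod N) := by
        rw [← hk, ZMod.natCast_val, ZMod.cast_id]
      have hval' : (v - u').val = k - j := by
        have : v - u' = (((k - j : ℕ)) : ZMod N) := by
          rw [hu'def, Nat.cast_sub (by omega)]
          rw [← hvu]; ring
        rw [this, ZMod.val_cast_of_lt (by omega)]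
      have hnb' : ¬ blockedF s S u' v := by
        rintro ⟨t', ht', hb⟩
        rw [hval'] at ht'
        obtain ⟨i, hi1, his, hiS⟩ := hnb (t' + j) (by omega)
        apply hiS
        have heq : u + ((t' + j + i : ℕ) : ZMod N) = u' + ((t' + i : ℕ) : ZMod N) := by
          rw [hu'def]; push_cast; ring
        rw [heq]
        exact hb i hi1 his
      exact hadj.reachable.trans
        (ih (k - j) (by omega) u' v hu' hv hval' hnb')
    · rcases Nat.eq_zero_or_pos k with hk0 | hkpos
      · have : v - u = 0 := by
          rw [← ZMod.val_eq_zero]; omega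
        have : u = v := by linear_combination -this
        subst this
        rfl
      · have hvu : v = u + ((k : ℕ) : ZMod N) := by
          have : v - u = ((k : ℕ) : ZMod N) := by
            rw [← hk, ZMod.natCast_val, ZMod.cast_id]
          linear_combination this
        have hadj : ((circulant N s).induce ((S : Set (ZMod N))ᶜ)).Adj ⟨u, hu⟩ ⟨v, hv⟩ := by
          have := circ_adjF h2s hkpos hks u
          rw [← hvu] at this
          exact this
        exact hadj.reachable

lemma reachB {N s : ℕ} [NeZero N] (S : Finset (ZMod N)) (h2s : 2 * s < N) (hs1 : 1 ≤ s) :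
    ∀ k : ℕ, ∀ u v : ZMod N, ∀ hu : u ∈ ((S : Set (ZMod N))ᶜ), ∀ hv : v ∈ ((S : Set (ZMod N))ᶜ),
      (u - v).val = k → ¬ blockedB s S u v →
      ((circulant N s).induce ((S : Set (ZMod N))ᶜ)).Reachable ⟨u, hu⟩ ⟨v, hv⟩ := by
  intro k
  induction k using Nat.strong_induction_on with
  | _ k ih =>
    intro u v hu hv hk hnb
    have hvalN : (u - v).val < N := ZMod.val_lt _
    rcases Nat.lt_or_ge s k with hks | hks
    · unfold blockedB at hnb
      push_neg at hnb
      obtain ⟨j, hj1, hjs, hjS⟩ := hnb 0 (by omega)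
      simp only [Nat.zero_add] at hjS
      set u' : ZMod N := u - ((j : ℕ) : ZMod N) with hu'def
      have hu' : u' ∈ ((S : Set (ZMod N))ᶜ) := by simpa using hjS
      have hadj : ((circulant N s).induce ((S : Set (ZMod N))ᶜ)).Adj ⟨u, hu⟩ ⟨u', hu'⟩ :=
        circ_adjB h2s hj1 hjs u
      have hvu : u - v = ((k : ℕ) : ZMod N) := by
        rw [← hk, ZMod.natCast_val, ZMod.cast_id]
      have hval' : (u' - v).val = k - j := by
        have : u' - v = (((k - j : ℕ)) : ZMod N) := by
          rw [hu'def, Nat.cast_sub (by omega)]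
          rw [← hvu]; ring
        rw [this, ZMod.val_cast_of_lt (by omega)]
      have hnb' : ¬ blockedB s S u' v := by
        rintro ⟨t', ht', hb⟩
        rw [hval'] at ht'
        obtain ⟨i, hi1, his, hiS⟩ := hnb (t' + j) (by omega)
        apply hiS
        have heq : u - ((t' + j + i : ℕ) : ZMod N) = u' - ((t' + i : ℕ) : ZMod N) := by
          rw [hu'def]; push_cast; ring
        rw [heq]
        exact hb i hi1 his
      exact hadj.reachable.trans
        (ih (k - j) (by omega) u' v hu' hv hval' hnb')
    · rcases Nat.eq_zero_or_pos k with hk0 | hkpos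
      · have : u - v = 0 := by
          rw [← ZMod.val_eq_zero]; omega
        have : u = v := by linear_combination this
        subst this
        rfl
      · have hvu : v = u - ((k : ℕ) : ZMod N) := by
          have : u - v = ((k : ℕ) : ZMod N) := by
            rw [← hk, ZMod.natCast_val, ZMod.cast_id]
          linear_combination -this
        have hadj : ((circulant N s).induce ((S : Set (ZMod N))ᶜ)).Adj ⟨u, hu⟩ ⟨v, hv⟩ := by
          have := circ_adjB h2s hkpos hks u
          rw [← hvu] at this
          exact this
        exact hadj.reachable

lemma not_both {N s : ℕ} [NeZero N] (S : Finset (ZMod N)) (h2s : 2 * s < N) (hs1 : 1 ≤ s)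
    (hcard : S.card ≤ 2 * s - 1) {u v : ZMod N} (hne : u ≠ v) :
    ¬ (blockedF s S u v ∧ blockedB s S u v) := by
  rintro ⟨⟨t1, ht1, hb1⟩, ⟨t2, ht2, hb2⟩⟩
  set k1 := (v - u).val with hk1
  set k2 := (u - v).val with hk2
  have hk1pos : 0 < k1 := by
    rcases Nat.eq_zero_or_pos k1 with h | h
    · exfalso; apply hne
      have : v - u = 0 := by rw [← ZMod.val_eq_zero]; omega
      linear_combination -this
    · exact h
  have hsum : k1 + k2 = N := by
    have hvune : v - u ≠ 0 := by
      intro h0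
      have : (v - u).val = 0 := by rw [h0]; simp
      omega
    have : u - v = -(v - u) := by ring
    rw [hk2, this, ZMod.neg_val]
    simp only [hvune, if_false]
    have := ZMod.val_lt (v - u)
    omega
  set A : Finset (ZMod N) := (Finset.Icc 1 s).image (fun j => u + ((t1 + j : ℕ) : ZMod N)) with hA
  set B : Finset (ZMod N) := (Finset.Icc 1 s).image (fun j => u - ((t2 + j : ℕ) : ZMod N)) with hB
  have cast_inj : ∀ a b : ℕ, a < N → b < N → ((a : ZMod N) = (b : ZMod N)) → a = b := by
    intro a b ha hb h
    rw [← ZMod.val_cast_of_lt ha, ← ZMod.val_cast_of_lt hb, h]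
  have hAcard : A.card = s := by
    rw [hA, Finset.card_image_of_injOn, Nat.card_Icc]
    · omega
    · intro a ha b hb h
      simp only [Finset.coe_Icc, Set.mem_Icc] at ha hb
      have h' : u + ((t1 + a : ℕ) : ZMod N) = u + ((t1 + b : ℕ) : ZMod N) := h
      have := cast_inj (t1 + a) (t1 + b) (by omega) (by omega) (add_left_cancel h')
      omega
  have hBcard : B.card = s := by
    rw [hB, Finset.card_image_of_injOn, Nat.card_Icc]
    · omega
    · intro a ha b hb h
      simp only [Finset.coe_Icc, Set.mem_Icc] at ha hb
      have h' : u - ((t2 + a : ℕ) : ZMod N) = u - ((t2 + b : ℕ) : ZMod N) := h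
      have h'' : ((t2 + a : ℕ) : ZMod N) = ((t2 + b : ℕ) : ZMod N) := by
        linear_combination -h'
      have := cast_inj (t2 + a) (t2 + b) (by omega) (by omega) h''
      omega
  have hAS : A ⊆ S := by
    intro x hx
    rw [hA] at hx
    simp only [Finset.mem_image, Finset.mem_Icc] at hx
    obtain ⟨j, ⟨hj1, hjs⟩, rfl⟩ := hx
    exact hb1 j hj1 hjs
  have hBS : B ⊆ S := by
    intro x hx
    rw [hB] at hx
    simp only [Finset.mem_image, Finset.mem_Icc] at hx
    obtain ⟨j, ⟨hj1, hjs⟩, rfl⟩ := hx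
    exact hb2 j hj1 hjs
  have hdisj : Disjoint A B := by
    rw [Finset.disjoint_left]
    intro x hxA hxB
    rw [hA] at hxA; rw [hB] at hxB
    simp only [Finset.mem_image, Finset.mem_Icc] at hxA hxB
    obtain ⟨a, ⟨ha1, has⟩, hxa⟩ := hxA
    obtain ⟨b, ⟨hb1', hbs⟩, hxb⟩ := hxB
    have : (((t1 + a) + (t2 + b) : ℕ) : ZMod N) = 0 := by
      push_cast
      have : u + ((t1 + a : ℕ) : ZMod N) = u - ((t2 + b : ℕ) : ZMod N) := by rw [hxa, hxb]
      push_cast at this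
      linear_combination this
    have hdvd := (ZMod.natCast_eq_zero_iff _ N).mp this
    have := Nat.le_of_dvd (by omega) hdvd
    omega
  have := Finset.card_le_card (Finset.union_subset hAS hBS)
  rw [Finset.card_union_of_disjoint hdisj, hAcard, hBcard] at this
  omega

/-- For even `N ≥ 4` and even `d = N_f + 1 < N` with `d/2 < N/2`, the
circulant graph `C_N(1, …, d/2)` is `N_f`-robust: removing any set of at most
`N_f = d - 1` vertices leaves a connected graph. -/
theorem stmt6 (N d N_f : ℕ) (hN : Even N) (h4 : 4 ≤ N) (hdNf : d = N_f + 1)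
    (hd : Even d) (hdN : d < N) (hs : d / 2 < N / 2) :
    ∀ S : Finset (ZMod N), S.card ≤ N_f →
      ((circulant N (d / 2)).induce ((S : Set (ZMod N))ᶜ)).Connected := by
  intro S hS
  haveI : NeZero N := ⟨by omega⟩
  set s := d / 2 with hsdef
  have hd2 : d = 2 * s := by
    obtain ⟨m, hm⟩ := hd; omega
  have hs1 : 1 ≤ s := by omega
  have h2s : 2 * s < N := by omega
  have hScard : S.card ≤ 2 * s - 1 := by omega
  rw [SimpleGraph.connected_iff]
  refine ⟨?_, ?_⟩
  · rintro ⟨u, hu⟩ ⟨v, hv⟩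
    by_cases hbf : blockedF s S u v
    · by_cases huv : u = v
      · subst huv; rfl
      · have hbb : ¬ blockedB s S u v := fun h => not_both S h2s hs1 hScard huv ⟨hbf, h⟩
        exact reachB S h2s hs1 _ u v hu hv rfl hbb
    · exact reachF S h2s hs1 _ u v hu hv rfl hbf
  · have hcardS : S.card < Fintype.card (ZMod N) := by
      rw [ZMod.card]; omega
    have hne : S ≠ Finset.univ := by
      intro h; rw [h, Finset.card_univ] at hcardS; omega
    have hcompl : (Sᶜ : Finset (ZMod N)).Nonempty := by
      rw [← Finset.card_pos, Finset.card_compl]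
      omega
    obtain ⟨x, hxc⟩ := hcompl
    have hx : x ∉ S := Finset.mem_compl.mp hxc
    exact ⟨⟨x, by simp [hx]⟩⟩
end

section
/- Let N be even with N ≥ 4 and let N_f + 1 be even, N_f + 1 < N. Any N_f-robust graph on N vertices has at least N(N_f+1)/2 edges, and the circulant graph C_N(1, ..., (N_f+1)/2) achieves exactly N(N_f+1)/2 edges while being N_f-robust. Hence the minimum number of edges of an N_f-robust graph on N vertices equals N(N_f+1)/2. -/
open Classical SimpleGraph

/-- `G` is `k`-robust: deleting any set of at most `k` vertices leaves a connected
induced subgraph. -/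
def Robust {V : Type*} (G : SimpleGraph V) (k : ℕ) : Prop :=
  ∀ S : Finset V, S.card ≤ k → (G.induce ((S : Set V)ᶜ)).Connected

instance circDec (N s : ℕ) : DecidableRel (circulant N s).Adj := fun i j =>
  inferInstanceAs (Decidable (i ≠ j ∧ cycDist N i j ≤ s))

section Aux
set_option linter.unusedSectionVars false
variable {N : ℕ} [NeZero N]

lemma add_natCast_inj {u : ZMod N} {a b : ℕ} (ha : a < N) (hb : b < N)
    (h : u + (a : ZMod N) = u + (b : ZMod N)) : a = b := by
  have h2 : (a : ZMod N) = b := add_left_cancel h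
  have h3 := congrArg ZMod.val h2
  rwa [ZMod.val_natCast_of_lt ha, ZMod.val_natCast_of_lt hb] at h3

lemma circ_adj_step {s a b : ℕ} (hb : b < N) (h1 : a < b) (h2 : b ≤ a + s)
    (u : ZMod N) : (circulant N s).Adj (u + a) (u + b) := by
  have hab : ((u + b) - (u + a) : ZMod N) = ((b - a : ℕ) : ZMod N) := by
    have hb' : (b : ZMod N) = ((b - a : ℕ) : ZMod N) + a := by
      rw [← Nat.cast_add, Nat.sub_add_cancel h1.le]
    rw [hb']; ring
  have hval : (((u + b) - (u + a) : ZMod N)).val = b - a := by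
    rw [hab, ZMod.val_natCast_of_lt (lt_of_le_of_lt (Nat.sub_le b a) hb)]
  refine ⟨fun h => absurd (add_natCast_inj (h1.trans hb) hb h) h1.ne, ?_⟩
  exact min_le_of_right_le (by omega)

lemma reach_or_window (s : ℕ) (S : Finset (ZMod N)) (u : ZMod N) (d : ℕ) (hdN : d < N)
    (hv : ((u + (d : ℕ) : ZMod N)) ∈ ((S : Set (ZMod N))ᶜ)) :
    ∀ k t, t + k = d → ∀ (hu : ((u + (t : ℕ) : ZMod N)) ∈ ((S : Set (ZMod N))ᶜ)),
      ((circulant N s).induce ((S : Set (ZMod N))ᶜ)).Reachable ⟨u + (t : ℕ), hu⟩ ⟨u + (d : ℕ), hv⟩ ∨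
      ∃ j, t < j ∧ j + s ≤ d ∧ ∀ i, j ≤ i → i < j + s → (u + (i : ℕ) : ZMod N) ∈ S := by
  intro k
  induction k using Nat.strong_induction_on with
  | _ k ih =>
    intro t ht hu
    rcases Nat.eq_zero_or_pos k with hk | hk
    · left
      have : t = d := by omega
      subst this
      exact Reachable.refl _
    · have htd : t < d := by omega
      by_cases hds : d ≤ t + s
      · left
        exact Adj.reachable (circ_adj_step hdN htd hds u)
      · by_cases hex : ∃ i, t < i ∧ i ≤ t + s ∧ (u + (i : ℕ) : ZMod N) ∉ S
        · obtain ⟨i, hti, his, hiS⟩ := hex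
          have hiN : i < N := by omega
          have hu' : (u + (i : ℕ) : ZMod N) ∈ ((S : Set (ZMod N))ᶜ) := by simpa using hiS
          rcases ih (d - i) (by omega) i (by omega) hu' with h | ⟨j, hj1, hj2, hj3⟩
          · left
            exact (Adj.reachable (circ_adj_step hiN hti his u)
              (G := (circulant N s).induce ((S : Set (ZMod N))ᶜ))
              (u := ⟨u + (t:ℕ), hu⟩) (v := ⟨u + (i:ℕ), hu'⟩)).trans h
          · right; exact ⟨j, by omega, hj2, hj3⟩
        · right
          push_neg at hex
          exact ⟨t + 1, by omega, by omega, fun i h1 h2 => hex i (by omega) (by omega)⟩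

lemma circ_conn {s : ℕ} (hs1 : 1 ≤ s) (hsN : 2 * s < N)
    (S : Finset (ZMod N)) (hS : S.card ≤ 2 * s - 1) :
    ((circulant N s).induce ((S : Set (ZMod N))ᶜ)).Connected := by
  have hN0 : 0 < N := Nat.pos_of_ne_zero (NeZero.ne N)
  have hScard : S.card < N := by omega
  have hcompl : (Sᶜ : Finset (ZMod N)).Nonempty := by
    rw [← Finset.card_pos, Finset.card_compl, Fintype.card_eq_nat_card]
    · rw [Nat.card_zmod]; omega
  obtain ⟨x, hx⟩ := hcompl
  have hx' : x ∈ ((S : Set (ZMod N))ᶜ) := by simpa using Finset.mem_compl.mp hx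
  rw [connected_iff]
  refine ⟨?_, ⟨⟨x, hx'⟩⟩⟩
  rintro ⟨a, ha⟩ ⟨b, hb⟩
  by_cases hab : a = b
  · subst hab; exact Reachable.refl _
  set d := (b - a).val with hd_def
  have hba : b - a ≠ 0 := sub_ne_zero_of_ne (Ne.symm hab)
  have hd0 : 0 < d := Nat.pos_of_ne_zero (fun h => hba ((ZMod.val_eq_zero _).mp h))
  have hdN : d < N := ZMod.val_lt _
  have hbad : a + (d : ZMod N) = b := by
    rw [hd_def, ZMod.natCast_val, ZMod.cast_id]; ring
  have hvd : ((a + (d : ℕ) : ZMod N)) ∈ ((S : Set (ZMod N))ᶜ) := by rw [hbad]; exact hb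
  have hu0 : ((a + ((0:ℕ) : ℕ) : ZMod N)) ∈ ((S : Set (ZMod N))ᶜ) := by
    simpa using ha
  have h1 := reach_or_window s S a d hdN hvd d 0 (by omega) hu0
  have hab' : (a - b).val = N - d := by
    rw [show a - b = -(b - a) by ring, ZMod.neg_val, if_neg hba]
  have hbda : b + ((N - d : ℕ) : ZMod N) = a := by
    have : ((N - d : ℕ) : ZMod N) = a - b := by
      rw [← hab', ZMod.natCast_val, ZMod.cast_id]
    rw [this]; ring
  have hvd' : ((b + ((N - d : ℕ) : ℕ) : ZMod N)) ∈ ((S : Set (ZMod N))ᶜ) := by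
    rw [hbda]; exact ha
  have hu0' : ((b + ((0:ℕ) : ℕ) : ZMod N)) ∈ ((S : Set (ZMod N))ᶜ) := by simpa using hb
  have h2 := reach_or_window s S b (N - d) (by omega) hvd' (N - d) 0 (by omega) hu0'
  rcases h1 with h1 | ⟨j, hj0, hjd, hjS⟩
  · have e1 : (⟨a + ((0:ℕ) : ZMod N), hu0⟩ : ((S : Set (ZMod N))ᶜ : Set (ZMod N))) = ⟨a, ha⟩ :=
      Subtype.ext (by simp)
    have e2 : (⟨a + ((d:ℕ) : ZMod N), hvd⟩ : ((S : Set (ZMod N))ᶜ : Set (ZMod N))) = ⟨b, hb⟩ :=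
      Subtype.ext hbad
    rwa [e1, e2] at h1
  rcases h2 with h2 | ⟨j', hj0', hjd', hjS'⟩
  · have e1 : (⟨b + ((0:ℕ) : ZMod N), hu0'⟩ : ((S : Set (ZMod N))ᶜ : Set (ZMod N))) = ⟨b, hb⟩ :=
      Subtype.ext (by simp)
    have e2 : (⟨b + (((N - d : ℕ)):ZMod N), hvd'⟩ : ((S : Set (ZMod N))ᶜ : Set (ZMod N))) = ⟨a, ha⟩ :=
      Subtype.ext hbda
    rw [e1, e2] at h2
    exact h2.symm
  exfalso
  set T : Finset ℕ := Finset.Ico j (j + s) ∪ Finset.Ico (d + j') (d + j' + s) with hT_def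
  have hTbound : ∀ i ∈ T, i < N := by
    intro i hi
    rw [hT_def, Finset.mem_union, Finset.mem_Ico, Finset.mem_Ico] at hi
    omega
  have hTsub : T.image (fun i : ℕ => a + (i : ZMod N)) ⊆ S := by
    intro y hy
    rw [Finset.mem_image] at hy
    obtain ⟨i, hi, rfl⟩ := hy
    rw [hT_def, Finset.mem_union, Finset.mem_Ico, Finset.mem_Ico] at hi
    rcases hi with hi | hi
    · exact hjS i hi.1 hi.2
    · have := hjS' (i - d) (by omega) (by omega)
      have he : b + ((i - d : ℕ) : ZMod N) = a + (i : ZMod N) := by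
        rw [← hbad, add_assoc, ← Nat.cast_add, show d + (i - d) = i by omega]
      rwa [he] at this
  have hTcard : T.card = 2 * s := by
    rw [hT_def, Finset.card_union_of_disjoint, Nat.card_Ico, Nat.card_Ico]
    · omega
    · rw [Finset.disjoint_left]
      intro i hi hi'
      rw [Finset.mem_Ico] at hi hi'
      omega
  have hinj : Set.InjOn (fun i : ℕ => a + (i : ZMod N)) ↑T := by
    intro x hx y hy h
    exact add_natCast_inj (hTbound x hx) (hTbound y hy) h
  have := Finset.card_le_card hTsub
  rw [Finset.card_image_of_injOn hinj, hTcard] at this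
  omega

lemma circ_nbhd {s : ℕ} (hsN : 2 * s < N) (i : ZMod N) :
    (circulant N s).neighborFinset i =
      (Finset.Icc 1 s ∪ Finset.Icc (N - s) (N - 1)).image (fun k : ℕ => i + (k : ZMod N)) := by
  have hN0 : 0 < N := Nat.pos_of_ne_zero (NeZero.ne N)
  ext j
  rw [mem_neighborFinset, Finset.mem_image]
  constructor
  · rintro ⟨hne, hle⟩
    have hji : j - i ≠ 0 := sub_ne_zero_of_ne (Ne.symm hne)
    have hpos : 0 < (j - i).val :=
      Nat.pos_of_ne_zero (fun h => hji ((ZMod.val_eq_zero _).mp h))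
    have hlt : (j - i).val < N := ZMod.val_lt _
    have hneg : (i - j).val = N - (j - i).val := by
      rw [show i - j = -(j - i) by ring, ZMod.neg_val, if_neg hji]
    rw [cycDist, hneg] at hle
    have hmin := min_le_iff.mp hle
    refine ⟨(j - i).val, ?_, ?_⟩
    · rw [Finset.mem_union, Finset.mem_Icc, Finset.mem_Icc]; omega
    · rw [ZMod.natCast_val, ZMod.cast_id]; ring
  · rintro ⟨k, hk, rfl⟩
    rw [Finset.mem_union, Finset.mem_Icc, Finset.mem_Icc] at hk
    have hkN : k < N := by omega
    have hk0 : 0 < k := by omega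
    have hval : ((i + (k : ZMod N)) - i).val = k := by
      rw [add_sub_cancel_left, ZMod.val_natCast_of_lt hkN]
    have hx0 : (i + (k : ZMod N)) - i ≠ 0 := by
      intro h; rw [h, ZMod.val_zero] at hval; omega
    have hneg : (i - (i + (k : ZMod N))).val = N - k := by
      rw [show i - (i + (k : ZMod N)) = -((i + (k : ZMod N)) - i) by ring, ZMod.neg_val,
        if_neg hx0, hval]
    constructor
    · intro h
      exact hx0 (by rw [← h, sub_self])
    · rw [cycDist, hneg, hval]
      rcases hk with h | h
      · exact min_le_of_right_le h.2
      · exact min_le_of_left_le (by omega)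

lemma circ_degree {s : ℕ} (hsN : 2 * s < N) (i : ZMod N) :
    (circulant N s).degree i = 2 * s := by
  have hN0 : 0 < N := Nat.pos_of_ne_zero (NeZero.ne N)
  rw [← card_neighborFinset_eq_degree, circ_nbhd hsN, Finset.card_image_of_injOn,
    Finset.card_union_of_disjoint, Nat.card_Icc, Nat.card_Icc]
  · omega
  · rw [Finset.disjoint_left]
    intro x hx hx'
    rw [Finset.mem_Icc] at hx hx'
    omega
  · intro x hx y hy h
    simp only [Finset.coe_union, Set.mem_union, Finset.coe_Icc, Set.mem_Icc] at hx hy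
    exact add_natCast_inj (by omega) (by omega) h

lemma circ_edges {s : ℕ} (hsN : 2 * s < N) :
    (circulant N s).edgeFinset.card = N * s := by
  have h := SimpleGraph.sum_degrees_eq_twice_card_edges (circulant N s)
  rw [Finset.sum_congr rfl (fun i _ => circ_degree hsN i), Finset.sum_const,
    Finset.card_univ, ZMod.card, smul_eq_mul] at h
  have h2 : 2 * (N * s) = 2 * (circulant N s).edgeFinset.card := by rw [← h]; ring
  omega

lemma robust_degree {G : SimpleGraph (ZMod N)} [DecidableRel G.Adj]
    {k : ℕ} (hR : Robust G k) (hkN : k + 1 < N) (v : ZMod N) : k + 1 ≤ G.degree v := by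
  have hN0 : 0 < N := Nat.pos_of_ne_zero (NeZero.ne N)
  by_contra h
  push_neg at h
  set S := G.neighborFinset v with hS_def
  have hScard : S.card ≤ k := by
    have : G.degree v = S.card := (card_neighborFinset_eq_degree G v).symm
    omega
  have hconn := hR S hScard
  have hvS : v ∉ S := notMem_neighborFinset_self G v
  have hwex : ((insert v S)ᶜ : Finset (ZMod N)).Nonempty := by
    rw [← Finset.card_pos, Finset.card_compl, Fintype.card_eq_nat_card, Nat.card_zmod]
    have := Finset.card_insert_le v S
    omega
  obtain ⟨w, hw⟩ := hwex
  rw [Finset.mem_compl, Finset.mem_insert] at hw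
  push_neg at hw
  obtain ⟨hwv, hwS⟩ := hw
  have hvC : v ∈ ((S : Set (ZMod N))ᶜ) := by simpa using hvS
  have hwC : w ∈ ((S : Set (ZMod N))ᶜ) := by simpa using hwS
  obtain ⟨p⟩ := hconn.preconnected ⟨v, hvC⟩ ⟨w, hwC⟩
  cases p with
  | nil => exact hwv rfl
  | @cons _ x _ hadj p' =>
    have hGadj : G.Adj v (x : ZMod N) := hadj
    have : (x : ZMod N) ∈ S := (mem_neighborFinset G v (x : ZMod N)).mpr hGadj
    exact x.2 (by simpa using this)

lemma robust_edges {G : SimpleGraph (ZMod N)} [DecidableRel G.Adj]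
    {k : ℕ} (hR : Robust G k) (hkN : k + 1 < N) :
    N * (k + 1) ≤ 2 * G.edgeFinset.card := by
  rw [← sum_degrees_eq_twice_card_edges]
  calc N * (k + 1) = ∑ _v : ZMod N, (k + 1) := by
        rw [Finset.sum_const, Finset.card_univ, ZMod.card, smul_eq_mul]
  _ ≤ ∑ v, G.degree v := Finset.sum_le_sum fun v _ => robust_degree hR hkN v

end Aux

/-- For even `N ≥ 4` and even `N_f + 1 < N` (with `(N_f+1)/2 < N/2`),
every `N_f`-robust graph on `N` vertices has at least `N(N_f+1)/2` edges, the circulant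
graph `C_N(1, …, (N_f+1)/2)` is `N_f`-robust with exactly `N(N_f+1)/2` edges, and hence
the minimum number of edges of an `N_f`-robust graph on `N` vertices is `N(N_f+1)/2`. -/
theorem stmt8 (N N_f : ℕ) (hN : Even N) (h4 : 4 ≤ N) (hd : Even (N_f + 1))
    (hdN : N_f + 1 < N) (hs : (N_f + 1) / 2 < N / 2) :
    (∀ G : SimpleGraph (ZMod N), Robust G N_f → N * (N_f + 1) / 2 ≤ G.edgeSet.ncard) ∧
    (Robust (circulant N ((N_f + 1) / 2)) N_f ∧
      (circulant N ((N_f + 1) / 2)).edgeSet.ncard = N * (N_f + 1) / 2) ∧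
    IsLeast {L : ℕ | ∃ G : SimpleGraph (ZMod N), Robust G N_f ∧ G.edgeSet.ncard = L}
      (N * (N_f + 1) / 2) := by
  haveI : NeZero N := ⟨by omega⟩
  set s := (N_f + 1) / 2 with hs_def
  obtain ⟨m, hm⟩ := hd
  have h2s : 2 * s = N_f + 1 := by omega
  have hsN : 2 * s < N := by omega
  have hs1 : 1 ≤ s := by omega
  have hedge_target : N * (N_f + 1) / 2 = N * s := by
    have h1 : N * (N_f + 1) = 2 * (N * s) := by rw [← h2s]; ring
    rw [h1, Nat.mul_div_cancel_left _ (by norm_num : (0:ℕ) < 2)]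
  have lower : ∀ G : SimpleGraph (ZMod N), Robust G N_f → N * (N_f + 1) / 2 ≤ G.edgeSet.ncard := by
    intro G hG
    letI : DecidableRel G.Adj := Classical.decRel _
    have hE : G.edgeSet.ncard = G.edgeFinset.card := by
      rw [← coe_edgeFinset, Set.ncard_coe_finset]
    rw [hE, hedge_target]
    have h := robust_edges hG (by omega)
    have h1 : N * (N_f + 1) = 2 * (N * s) := by rw [← h2s]; ring
    omega
  have hrob : Robust (circulant N s) N_f := by
    intro S hS
    exact circ_conn hs1 hsN S (by omega)
  have hcount : (circulant N s).edgeSet.ncard = N * (N_f + 1) / 2 := by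
    have hE : (circulant N s).edgeSet.ncard = (circulant N s).edgeFinset.card := by
      rw [← coe_edgeFinset, Set.ncard_coe_finset]
    rw [hE, circ_edges hsN, hedge_target]
  exact ⟨lower, ⟨hrob, hcount⟩,
    ⟨⟨circulant N s, hrob, hcount⟩, fun L ⟨G, hG, hL⟩ => hL ▸ lower G hG⟩⟩
end

section
/- Suppose N is divisible by 2m for some integer m ≥ 2. Consider the graph G on N vertices constructed by: partitioning the vertices into 2m cliques of size N/(2m) each, and adding N/(2m) vertex-disjoint cycles, each cycle passing through exactly one vertex of each clique, such that the cycles are pairwise vertex-disjoint and each vertex lies on exactly one cycle. Then removing any N/(2m) vertices from G leaves a connected graph. -/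
open Classical SimpleGraph

/-- The clique–cycle graph on `ZMod (2m) × ZMod q`: the fibers `{a} × ZMod q` are
cliques and the fibers `ZMod (2m) × {b}` are cycles on the first coordinate. -/
def cliqueCycle (m q : ℕ) : SimpleGraph (ZMod (2 * m) × ZMod q) where
  Adj p p' := p ≠ p' ∧
    ((p.1 = p'.1 ∧ p.2 ≠ p'.2) ∨ (p.2 = p'.2 ∧ (p'.1 = p.1 + 1 ∨ p.1 = p'.1 + 1)))
  symm := by
    constructor
    rintro ⟨a, b⟩ ⟨c, d⟩ ⟨hne, (⟨h1, h2⟩ | ⟨h1, h2⟩)⟩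
    · exact ⟨hne.symm, Or.inl ⟨h1.symm, h2.symm⟩⟩
    · exact ⟨hne.symm, Or.inr ⟨h1.symm, h2.symm⟩⟩
  loopless := by constructor; rintro ⟨a, b⟩ ⟨h, _⟩; exact h rfl

/-- For `m ≥ 2` and `q ≥ 1` (so `N = 2mq` is divisible by `2m` with
`q = N/(2m)`), the graph consisting of `2m` cliques of size `q` and `q` pairwise
vertex-disjoint cycles, each through exactly one vertex of each clique, remains
connected after removing any `N/(2m) = q` vertices. -/
theorem stmt9 (m q : ℕ) (hm : 2 ≤ m) (hq : 1 ≤ q) :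
    ∀ S : Finset (ZMod (2 * m) × ZMod q), S.card ≤ q →
      ((cliqueCycle m q).induce ((S : Set (ZMod (2 * m) × ZMod q))ᶜ)).Connected := by
  intro S hS
  haveI : NeZero q := ⟨by omega⟩
  haveI : NeZero (2 * m) := ⟨by omega⟩
  set G := cliqueCycle m q with hG
  set T : Set (ZMod (2 * m) × ZMod q) := (↑S)ᶜ with hT
  have hmem : ∀ p, p ∉ S → p ∈ T := fun p hp => hp
  have hcast_ne : ∀ k : ℕ, 0 < k → k < 2 * m → ((k : ZMod (2 * m)) ≠ 0) := by
    intro k h1 h2 h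
    rw [ZMod.natCast_eq_zero_iff] at h
    have := Nat.le_of_dvd h1 h
    omega
  have hone : (1 : ZMod (2 * m)) ≠ 0 := by
    have := hcast_ne 1 (by omega) (by omega)
    simpa using this
  -- a step along a cycle
  have stepR : ∀ (a : ZMod (2 * m)) (b : ZMod q) (h1 : (a, b) ∈ T) (h2 : (a + 1, b) ∈ T),
      (G.induce T).Reachable ⟨(a, b), h1⟩ ⟨(a + 1, b), h2⟩ := by
    intro a b h1 h2
    apply Adj.reachable
    show G.Adj (a, b) (a + 1, b)
    refine ⟨?_, Or.inr ⟨rfl, Or.inl rfl⟩⟩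
    intro hcon
    have h3 : a = a + 1 := congrArg Prod.fst hcon
    have : a + 0 = a + 1 := by simpa using h3
    exact hone (add_left_cancel this).symm
  -- a clique edge
  have cliqueR : ∀ (a : ZMod (2 * m)) (b b' : ZMod q) (hbb : b ≠ b')
      (h1 : (a, b) ∈ T) (h2 : (a, b') ∈ T),
      (G.induce T).Reachable ⟨(a, b), h1⟩ ⟨(a, b'), h2⟩ := by
    intro a b b' hbb h1 h2
    apply Adj.reachable
    show G.Adj (a, b) (a, b')
    exact ⟨by simp [Prod.ext_iff, hbb], Or.inl ⟨rfl, hbb⟩⟩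
  have reach_congr : ∀ {p p' : ZMod (2 * m) × ZMod q}, p = p' → ∀ (hp : p ∈ T) (hp' : p' ∈ T)
      {u : ↑T}, (G.induce T).Reachable u ⟨p, hp⟩ → (G.induce T).Reachable u ⟨p', hp'⟩ := by
    rintro p p' rfl hp hp' u h
    exact h
  by_cases hA : ∃ b0 : ZMod q, ∀ a : ZMod (2 * m), (a, b0) ∉ S
  · -- Case A: some cycle is untouched
    obtain ⟨b0, hb0⟩ := hA
    have hmemb0 : ∀ a, (a, b0) ∈ T := fun a => hmem _ (hb0 a)
    -- walk along cycle b0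
    have walk : ∀ (a : ZMod (2 * m)) (k : ℕ),
        (G.induce T).Reachable ⟨(a, b0), hmemb0 a⟩ ⟨(a + (k : ZMod (2 * m)), b0), hmemb0 _⟩ := by
      intro a k
      induction k with
      | zero =>
        simp only [Nat.cast_zero, add_zero]
        exact Reachable.refl _
      | succ k ih =>
        refine ih.trans ?_
        have := stepR (a + (k : ZMod (2 * m))) b0 (hmemb0 _) (hmemb0 _)
        refine reach_congr ?_ _ _ this
        exact Prod.ext (by push_cast; ring) rfl
    have cyc : ∀ (a a' : ZMod (2 * m)),
        (G.induce T).Reachable ⟨(a, b0), hmemb0 a⟩ ⟨(a', b0), hmemb0 a'⟩ := by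
      intro a a'
      have := walk a (a' - a).val
      refine reach_congr ?_ _ _ this
      exact Prod.ext (by rw [ZMod.natCast_zmod_val]; ring) rfl
    have hub : ∀ (p : ZMod (2 * m) × ZMod q) (hp : p ∈ T),
        (G.induce T).Reachable ⟨p, hp⟩ ⟨(p.1, b0), hmemb0 p.1⟩ := by
      rintro ⟨a, b⟩ hp
      rcases eq_or_ne b b0 with h | h
      · subst h; exact Reachable.refl _
      · exact cliqueR a b b0 h hp (hmemb0 a)
    rw [connected_iff]
    refine ⟨?_, ⟨⟨(0, b0), hmemb0 0⟩⟩⟩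
    rintro ⟨⟨a, b⟩, hp⟩ ⟨⟨a', b'⟩, hp'⟩
    exact ((hub _ hp).trans (cyc a a')).trans (hub _ hp').symm
  · -- Case B: every cycle meets S
    push_neg at hA
    -- choose for each b the unique element of S on cycle b
    choose f hf using hA
    -- the map b ↦ (f b, b) into S is injective, hence bijective
    have hginj : Function.Injective (fun b : ZMod q => (⟨(f b, b), hf b⟩ : {x // x ∈ S})) := by
      intro b b' h
      have := congrArg (fun x : {x // x ∈ S} => x.1.2) h
      simpa using this
    have hcard : Fintype.card (ZMod q) = Fintype.card {x // x ∈ S} := by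
      have h1 : Fintype.card (ZMod q) ≤ Fintype.card {x // x ∈ S} :=
        Fintype.card_le_of_injective _ hginj
      have h2 : Fintype.card {x // x ∈ S} ≤ q := by
        rw [Fintype.card_coe]; exact hS
      rw [ZMod.card] at h1 ⊢
      omega
    have hgsurj : Function.Surjective (fun b : ZMod q => (⟨(f b, b), hf b⟩ : {x // x ∈ S})) :=
      ((Fintype.bijective_iff_injective_and_card _).mpr ⟨hginj, hcard⟩).2
    have huniq : ∀ (a : ZMod (2 * m)) (b : ZMod q), (a, b) ∈ S → a = f b := by
      intro a b hab
      obtain ⟨b', hb'⟩ := hgsurj ⟨(a, b), hab⟩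
      have h1 : ((f b', b') : ZMod (2 * m) × ZMod q) = (a, b) := congrArg Subtype.val hb'
      have h2 : b' = b := congrArg Prod.snd h1
      have h3 : f b' = a := congrArg Prod.fst h1
      rw [← h2, h3]
    have hsurv : ∀ (b : ZMod q) (k : ℕ), 0 < k → k < 2 * m →
        (f b + (k : ZMod (2 * m)), b) ∈ T := by
      intro b k h1 h2
      apply hmem
      intro hcon
      have := huniq _ _ hcon
      have h3 : (k : ZMod (2 * m)) = 0 := by
        have : f b + (k : ZMod (2 * m)) = f b + 0 := by simpa using this
        exact add_left_cancel this
      exact hcast_ne k h1 h2 h3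
    -- walk within cycle b among survivors, from f b + 1 to f b + k
    have walkB : ∀ (b : ZMod q) (k : ℕ) (h1 : 0 < k) (h2 : k < 2 * m),
        (G.induce T).Reachable ⟨(f b + 1, b), by simpa using hsurv b 1 (by omega) (by omega)⟩
          ⟨(f b + (k : ZMod (2 * m)), b), hsurv b k h1 h2⟩ := by
      intro b k h1 h2
      induction k with
      | zero => omega
      | succ k ih =>
        rcases Nat.eq_or_lt_of_le h1 with h | h
        · refine reach_congr ?_ _ _ (Reachable.refl _)
          exact Prod.ext (by rw [← h]; norm_num) rfl
        · have hk1 : 0 < k := by omega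
          have hk2 : k < 2 * m := by omega
          refine (ih hk1 hk2).trans ?_
          have := stepR (f b + (k : ZMod (2 * m))) b (hsurv b k hk1 hk2)
            (by
              have hk : ((k + 1 : ℕ) : ZMod (2 * m)) = (k : ZMod (2 * m)) + 1 := by
                push_cast; ring
              rw [add_assoc, ← hk]
              exact hsurv b (k + 1) (by omega) h2)
          refine reach_congr ?_ _ _ this
          exact Prod.ext (by push_cast; ring) rfl
    -- every survivor on cycle b reaches (f b + 1, b)
    have toHub : ∀ (a : ZMod (2 * m)) (b : ZMod q) (hp : (a, b) ∈ T),
        (G.induce T).Reachable ⟨(a, b), hp⟩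
          ⟨(f b + 1, b), by simpa using hsurv b 1 (by omega) (by omega)⟩ := by
      intro a b hp
      have hane : a ≠ f b := by
        intro h; exact hp (by simp [h, hf b])
      have h0 : a - f b ≠ 0 := sub_ne_zero.mpr hane
      have h1 : 0 < (a - f b).val := by
        rcases Nat.eq_zero_or_pos (a - f b).val with h | h
        · exact absurd ((ZMod.val_eq_zero _).mp h) h0
        · exact h
      have h2 : (a - f b).val < 2 * m := ZMod.val_lt _
      have := walkB b (a - f b).val h1 h2
      refine (reach_congr ?_ _ _ this).symm
      exact Prod.ext (by rw [ZMod.natCast_zmod_val]; ring) rfl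
    rw [connected_iff]
    refine ⟨?_, ⟨⟨(f 0 + 1, 0), by simpa using hsurv 0 1 (by omega) (by omega)⟩⟩⟩
    rintro ⟨⟨a, b⟩, hp⟩ ⟨⟨a', b'⟩, hp'⟩
    rcases eq_or_ne b b' with h | h
    · subst h
      exact (toHub a b hp).trans (toHub a' b hp').symm
    · -- pick a* ∈ {f b + 1, f b + 2} with a* ≠ f b'
      have h2ne : (2 : ZMod (2 * m)) ≠ 0 := by
        have := hcast_ne 2 (by omega) (by omega)
        simpa using this
      have key : ∃ k : ℕ, 0 < k ∧ k < 2 * m ∧ f b + (k : ZMod (2 * m)) ≠ f b' := by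
        rcases eq_or_ne (f b + 1) (f b') with h1 | h1
        · refine ⟨2, by omega, by omega, ?_⟩
          intro hcon
          rw [← h1] at hcon
          have : (2 : ZMod (2 * m)) = 1 := by
            have := add_left_cancel hcon
            simpa using this
          have h2 : (2 : ZMod (2 * m)) = 1 + 1 := by ring
          rw [h2] at this
          have h' : (1 : ZMod (2 * m)) + 1 = 0 + 1 := by rw [zero_add]; exact this
          exact hone (add_right_cancel h')
        · exact ⟨1, by omega, by omega, by simpa using h1⟩
      obtain ⟨k, hk1, hk2, hkne⟩ := key
      have hs1 : (f b + (k : ZMod (2 * m)), b) ∈ T := hsurv b k hk1 hk2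
      have hs2 : (f b + (k : ZMod (2 * m)), b') ∈ T := by
        apply hmem
        intro hcon
        exact hkne (huniq _ _ hcon)
      refine ((toHub a b hp).trans ((walkB b k hk1 hk2).trans ?_)).trans (toHub a' b' hp').symm
      refine (cliqueR _ b b' h hs1 hs2).trans ?_
      have := toHub (f b + (k : ZMod (2 * m))) b' hs2
      exact this
end

section
/- Consider a dynamic process where at each step one new vertex is inserted into a cycle (arbitrarily between two consecutive cycle vertices) and the new vertex is joined by edges to all vertices within cyclic distance s of it in the updated cycle, for a fixed s ≥ 1. If initially (at size N_0 ≥ 2s + 1) every vertex is adjacent to all vertices within cyclic distance s in the cycle, then after every step, every vertex is still adjacent to all vertices within cyclic distance s in the updated cycle; i.e., the circulant graph C_{N_k}(1,...,s) is a subgraph of the network at every time k. -/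
open Classical SimpleGraph

lemma cycDist_comm (N : ℕ) (i j : ZMod N) : cycDist N i j = cycDist N j i :=
  min_comm _ _

lemma sub_val_natCast (n u v : ℕ) (hn : 0 < n) (hv : v ≤ n) :
    ((u : ZMod n) - (v : ZMod n)).val = (u + n - v) % n := by
  haveI : NeZero n := ⟨hn.ne'⟩
  have h2 : ((u + n - v : ℕ) : ZMod n) + v = u := by
    have h3 : (u + n - v) + v = u + n := by omega
    calc ((u + n - v : ℕ) : ZMod n) + v = ((u + n - v + v : ℕ) : ZMod n) := by push_cast; ring
      _ = ((u + n : ℕ) : ZMod n) := by rw [h3]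
      _ = u := by push_cast; simp
  rw [← eq_sub_of_add_eq h2, ZMod.val_natCast]

lemma mod_sub (n u v : ℕ) (hn : 0 < n) (hu : u < n) (hv : v < n) :
    (u + n - v) % n = if v ≤ u then u - v else u + n - v := by
  split_ifs with h
  · have h4 : u + n - v = n + (u - v) := by omega
    rw [h4, Nat.add_mod_left, Nat.mod_eq_of_lt (by omega)]
  · exact Nat.mod_eq_of_lt (by omega)

lemma key (n J u v fu fv s : ℕ) (hu : u < n) (hv : v < n) (huv : u ≠ v)
    (hfu : fu = if u < J then u else u + 1) (hfv : fv = if v < J then v else v + 1)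
    (hd : min ((fu + (n+1) - fv) % (n+1)) ((fv + (n+1) - fu) % (n+1)) ≤ s) :
    min ((u + n - v) % n) ((v + n - u) % n) ≤ s := by
  have hfu' : fu < n + 1 := by split_ifs at hfu <;> omega
  have hfv' : fv < n + 1 := by split_ifs at hfv <;> omega
  rw [mod_sub n u v (by omega) hu hv, mod_sub n v u (by omega) hv hu]
  rw [mod_sub (n+1) fu fv (by omega) hfu' hfv',
      mod_sub (n+1) fv fu (by omega) hfv' hfu'] at hd
  split_ifs at hfu hfv hd ⊢ <;> omega

/-- dynamic insertion into a cycle.  At time `k` the network `G k` has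
vertices `0, …, N0 + k - 1`; the current cyclic ordering is recorded by the bijection
`c k : ZMod (N0 + k) → ℕ` from positions to vertices.  At each step the new vertex
`N0 + k` is inserted at position `j k` (old positions at or after `j k` shift by one),
edges are never removed, and the new vertex is joined to every vertex within cyclic
distance `s` of it in the updated cycle.  If initially every pair of vertices at cyclic
distance at most `s` is adjacent, then this remains true after every step: the circulant
graph `C_{N0+k}(1, …, s)` is always a subgraph of the network. -/
theorem stmt13 (s N0 : ℕ) (hs : 1 ≤ s) (hN0 : 2 * s + 1 ≤ N0)
    (c : (k : ℕ) → ZMod (N0 + k) → ℕ)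
    (hinj : ∀ k, Function.Injective (c k))
    (hrange : ∀ k i, c k i < N0 + k)
    (G : ℕ → SimpleGraph ℕ)
    (hmono : ∀ k, G k ≤ G (k + 1))
    (j : (k : ℕ) → ZMod (N0 + k + 1))
    (hnew : ∀ k, c (k + 1) (j k) = N0 + k)
    (hold : ∀ k (i : ZMod (N0 + k)),
      c (k + 1) (if i.val < (j k).val then ((i.val : ℕ) : ZMod (N0 + k + 1))
                 else ((i.val + 1 : ℕ) : ZMod (N0 + k + 1))) = c k i)
    (hnewedges : ∀ k (i : ZMod (N0 + k + 1)), i ≠ j k →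
      cycDist (N0 + k + 1) (j k) i ≤ s →
      (G (k + 1)).Adj (c (k + 1) (j k)) (c (k + 1) i))
    (hinit : ∀ i i' : ZMod N0, i ≠ i' → cycDist N0 i i' ≤ s →
      (G 0).Adj (c 0 i) (c 0 i')) :
    ∀ k (i i' : ZMod (N0 + k)), i ≠ i' → cycDist (N0 + k) i i' ≤ s →
      (G k).Adj (c k i) (c k i') := by
  intro k
  induction k with
  | zero => exact fun i i' hne hd => hinit i i' hne hd
  | succ k ih =>
    intro i i' hne hd
    set n := N0 + k with hn
    have hn3 : 3 ≤ n := by omega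
    haveI : NeZero (N0 + (k + 1)) := ⟨by omega⟩
    haveI : NeZero (n + 1) := ⟨by omega⟩
    haveI : NeZero n := ⟨by omega⟩
    by_cases hi : i = j k
    · subst hi
      exact hnewedges k i' (Ne.symm hne) hd
    · by_cases hi' : i' = j k
      · subst hi'
        exact (hnewedges k i hi (by rw [cycDist_comm]; exact hd)).symm
      · -- both old vertices
        set J := (j k).val with hJ
        have hJlt : J < n + 1 := (j k).val_lt
        have hvi : i.val < n + 1 := i.val_lt
        have hvi' : i'.val < n + 1 := i'.val_lt
        have hiJ : i.val ≠ J := fun h => hi (ZMod.val_injective _ h)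
        have hi'J : i'.val ≠ J := fun h => hi' (ZMod.val_injective _ h)
        have hvv : i.val ≠ i'.val := fun h => hne (ZMod.val_injective _ h)
        set u : ℕ := if i.val < J then i.val else i.val - 1 with hu_def
        set u' : ℕ := if i'.val < J then i'.val else i'.val - 1 with hu'_def
        have hu : u < n := by simp only [hu_def]; split_ifs <;> omega
        have hu' : u' < n := by simp only [hu'_def]; split_ifs <;> omega
        have hfu : i.val = if u < J then u else u + 1 := by
          simp only [hu_def]; split_ifs <;> omega
        have hfu' : i'.val = if u' < J then u' else u' + 1 := by
          simp only [hu'_def]; split_ifs <;> omega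
        have huu' : u ≠ u' := by
          simp only [hu_def, hu'_def]; split_ifs <;> omega
        have hvalu : ((u : ZMod n)).val = u := ZMod.val_cast_of_lt hu
        have hvalu' : ((u' : ZMod n)).val = u' := ZMod.val_cast_of_lt hu'
        -- relate c (k+1) i to c k ↑u
        have hcu : c (k + 1) i = c k (u : ZMod n) := by
          have h := hold k (u : ZMod n)
          rw [hvalu] at h
          rcases lt_or_ge u J with hlt | hge
          · rw [if_pos hlt] at h
            have hiu : i.val = u := by rw [hfu, if_pos hlt]
            rw [← h, ← hiu]
            congr 1
            simp [ZMod.natCast_val, ZMod.cast_id]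
          · rw [if_neg (not_lt.mpr hge)] at h
            have hiu : i.val = u + 1 := by rw [hfu, if_neg (not_lt.mpr hge)]
            rw [← h, ← hiu]
            congr 1
            simp [ZMod.natCast_val, ZMod.cast_id]
        have hcu' : c (k + 1) i' = c k (u' : ZMod n) := by
          have h := hold k (u' : ZMod n)
          rw [hvalu'] at h
          rcases lt_or_ge u' J with hlt | hge
          · rw [if_pos hlt] at h
            have hiu : i'.val = u' := by rw [hfu', if_pos hlt]
            rw [← h, ← hiu]
            congr 1
            simp [ZMod.natCast_val, ZMod.cast_id]
          · rw [if_neg (not_lt.mpr hge)] at h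
            have hiu : i'.val = u' + 1 := by rw [hfu', if_neg (not_lt.mpr hge)]
            rw [← h, ← hiu]
            congr 1
            simp [ZMod.natCast_val, ZMod.cast_id]
        -- distance in old cycle
        have hdmod : min ((i.val + (n+1) - i'.val) % (n+1))
            ((i'.val + (n+1) - i.val) % (n+1)) ≤ s := by
          have e1 : i = ((i.val : ℕ) : ZMod (n+1)) := by
            simp [ZMod.natCast_val, ZMod.cast_id]
          have e2 : i' = ((i'.val : ℕ) : ZMod (n+1)) := by
            simp [ZMod.natCast_val, ZMod.cast_id]
          unfold cycDist at hd
          rw [e1, e2, sub_val_natCast (n+1) i.val i'.val (by omega) (by omega),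
            sub_val_natCast (n+1) i'.val i.val (by omega) (by omega)] at hd
          exact hd
        have hkey := key n J u u' i.val i'.val s hu hu' huu' hfu hfu' hdmod
        have hdn : cycDist n (u : ZMod n) (u' : ZMod n) ≤ s := by
          unfold cycDist
          rw [sub_val_natCast n u u' (by omega) (by omega),
            sub_val_natCast n u' u (by omega) (by omega)]
          exact hkey
        have hne2 : (u : ZMod n) ≠ (u' : ZMod n) := by
          intro h
          exact huu' (by rw [← hvalu, ← hvalu', h])
        rw [hcu, hcu']
        exact hmono k (ih (u : ZMod n) (u' : ZMod n) hne2 hdn)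
end

section
/- Let G be the graph on vertex set A ∪ B where A = {a_1,...,a_n}, B = {b_1,...,b_n} (n ≥ 2), A and B induce cliques, a_i ~ b_i for every i, and additionally a_1 ~ b_j and b_1 ~ a_j for all j (vertex 1 of each half is joined to every vertex of the other half). Then for every set S with |S| ≤ n, G minus S is connected. -/
open Classical SimpleGraph

/-- The `f = 1` construction: two cliques `A = {a_1, …, a_n}` (left summand) and
`B = {b_1, …, b_n}` (right summand), the perfect matching `a_i ~ b_i`, and all edges
from `a_1` to `B` and from `b_1` to `A`. -/
def hubCliques (n : ℕ) : SimpleGraph (Fin n ⊕ Fin n) where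
  Adj x y := x ≠ y ∧
    match x, y with
    | .inl _, .inl _ => True
    | .inr _, .inr _ => True
    | .inl i, .inr j => i = j ∨ (i : ℕ) = 0 ∨ (j : ℕ) = 0
    | .inr i, .inl j => i = j ∨ (i : ℕ) = 0 ∨ (j : ℕ) = 0
  symm := ⟨by
    rintro (i | i) (j | j) ⟨hne, h⟩ <;>
      exact ⟨hne.symm, by simp_all <;> tauto⟩⟩
  loopless := ⟨by rintro (i | i) ⟨hne, _⟩ <;> exact hne rfl⟩

lemma hub_adjLL {n : ℕ} {a b : Fin n} (h : a ≠ b) :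
    (hubCliques n).Adj (.inl a) (.inl b) :=
  ⟨by simpa using h, trivial⟩

lemma hub_adjRR {n : ℕ} {a b : Fin n} (h : a ≠ b) :
    (hubCliques n).Adj (.inr a) (.inr b) :=
  ⟨by simpa using h, trivial⟩

lemma hub_adjLR {n : ℕ} {a b : Fin n} (h : a = b ∨ (a : ℕ) = 0 ∨ (b : ℕ) = 0) :
    (hubCliques n).Adj (.inl a) (.inr b) :=
  ⟨by simp, h⟩

/-- In the `f = 1` construction (two `n`-cliques, a perfect matching, and
the first vertex of each half joined to every vertex of the other half), removing any
set of at most `n` vertices leaves a connected graph. -/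
theorem stmt16 (n : ℕ) (hn : 2 ≤ n) :
    ∀ S : Finset (Fin n ⊕ Fin n), S.card ≤ n →
      ((hubCliques n).induce ((S : Set (Fin n ⊕ Fin n))ᶜ)).Connected := by
  intro S hS
  classical
  have hnpos : 0 < n := by omega
  have hmem : ∀ x : Fin n ⊕ Fin n, x ∈ ((S : Set (Fin n ⊕ Fin n))ᶜ) ↔ x ∉ S := by
    intro x; simp
  set L : Finset (Fin n) := Finset.univ.filter (fun i => Sum.inl i ∈ S) with hLdef
  set R : Finset (Fin n) := Finset.univ.filter (fun i => Sum.inr i ∈ S) with hRdef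
  have hSeq : S = L.image Sum.inl ∪ R.image Sum.inr := by
    ext x; cases x <;> simp [hLdef, hRdef]
  have hdisj : Disjoint (L.image Sum.inl) (R.image Sum.inr) := by
    rw [Finset.disjoint_left]
    rintro x hx hx'
    simp only [Finset.mem_image] at hx hx'
    obtain ⟨a, _, rfl⟩ := hx
    obtain ⟨b, _, hb⟩ := hx'
    exact absurd hb (by simp)
  have hcard : L.card + R.card ≤ n := by
    have := Finset.card_union_of_disjoint hdisj
    rw [hSeq, this, Finset.card_image_of_injective _ Sum.inl_injective,
      Finset.card_image_of_injective _ Sum.inr_injective] at hS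
    exact hS
  rw [connected_iff]
  by_cases hAllL : ∀ i : Fin n, Sum.inl i ∈ S
  · -- left half fully deleted; all of right survives
    have hLuniv : L = Finset.univ := by
      ext i; simp [hLdef, hAllL i]
    have hRcard : R.card = 0 := by
      rw [hLuniv, Finset.card_univ, Fintype.card_fin] at hcard; omega
    have hRsurv : ∀ j : Fin n, Sum.inr j ∉ S := by
      intro j hj
      have : j ∈ R := by simp [hRdef, hj]
      simp [Finset.card_eq_zero.mp hRcard] at this
    refine ⟨?_, ⟨⟨Sum.inr ⟨0, hnpos⟩, (hmem _).mpr (hRsurv _)⟩⟩⟩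
    rintro ⟨x, hx⟩ ⟨y, hy⟩
    rw [hmem] at hx hy
    cases x with
    | inl a => exact absurd (hAllL a) hx
    | inr a =>
      cases y with
      | inl b => exact absurd (hAllL b) hy
      | inr b =>
        by_cases hab : a = b
        · subst hab; exact Reachable.refl _
        · exact SimpleGraph.Adj.reachable (hub_adjRR hab)
  · by_cases hAllR : ∀ j : Fin n, Sum.inr j ∈ S
    · -- right half fully deleted
      have hRuniv : R = Finset.univ := by
        ext i; simp [hRdef, hAllR i]
      have hLcard : L.card = 0 := by
        rw [hRuniv, Finset.card_univ, Fintype.card_fin] at hcard; omega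
      have hLsurv : ∀ j : Fin n, Sum.inl j ∉ S := by
        intro j hj
        have : j ∈ L := by simp [hLdef, hj]
        simp [Finset.card_eq_zero.mp hLcard] at this
      refine ⟨?_, ⟨⟨Sum.inl ⟨0, hnpos⟩, (hmem _).mpr (hLsurv _)⟩⟩⟩
      rintro ⟨x, hx⟩ ⟨y, hy⟩
      rw [hmem] at hx hy
      cases x with
      | inr a => exact absurd (hAllR a) hx
      | inl a =>
        cases y with
        | inr b => exact absurd (hAllR b) hy
        | inl b =>
          by_cases hab : a = b
          · subst hab; exact Reachable.refl _
          · exact SimpleGraph.Adj.reachable (hub_adjLL hab)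
    · -- both halves have survivors; find a surviving cross edge
      push_neg at hAllL hAllR
      obtain ⟨i0, hi0⟩ := hAllL
      obtain ⟨j0, hj0⟩ := hAllR
      have hcross : ∃ i j : Fin n, Sum.inl i ∉ S ∧ Sum.inr j ∉ S ∧
          (i = j ∨ (i : ℕ) = 0 ∨ (j : ℕ) = 0) := by
        by_contra hno
        push_neg at hno
        have hz : (⟨0, hnpos⟩ : Fin n) ∈ L := by
          by_contra h
          have : Sum.inl (⟨0, hnpos⟩ : Fin n) ∉ S := by
            intro h'; exact h (by simp [hLdef, h'])
          exact (hno _ _ this hj0).2.1 rfl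
        have hmatch : ∀ i : Fin n, i ∉ L → i ∈ R := by
          intro i hiL
          by_contra hiR
          have h1 : Sum.inl i ∉ S := fun h' => hiL (by simp [hLdef, h'])
          have h2 : Sum.inr i ∉ S := fun h' => hiR (by simp [hRdef, h'])
          exact (hno _ _ h1 h2).1 rfl
        have hsub : insert (⟨0, hnpos⟩ : Fin n) Lᶜ ⊆ R := by
          intro i hi
          rcases Finset.mem_insert.mp hi with rfl | hi
          · by_contra h
            have : Sum.inr (⟨0, hnpos⟩ : Fin n) ∉ S := fun h' => h (by simp [hRdef, h'])
            exact (hno _ _ hi0 this).2.2 rfl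
          · exact hmatch i (Finset.mem_compl.mp hi)
        have hR1 : Lᶜ.card + 1 ≤ R.card := by
          have h0 : (⟨0, hnpos⟩ : Fin n) ∉ Lᶜ := by simpa using hz
          have := Finset.card_le_card hsub
          rw [Finset.card_insert_of_notMem h0] at this; omega
        have hcompl : Lᶜ.card = n - L.card := by
          rw [Finset.card_compl]; simp
        have hLle : L.card ≤ n := (Finset.card_le_card (Finset.subset_univ L)).trans (by simp)
        omega
      obtain ⟨i, j, hiS, hjS, hadj⟩ := hcross
      set pA : ((S : Set (Fin n ⊕ Fin n))ᶜ : Set _) := ⟨Sum.inl i, (hmem _).mpr hiS⟩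
      set pB : ((S : Set (Fin n ⊕ Fin n))ᶜ : Set _) := ⟨Sum.inr j, (hmem _).mpr hjS⟩
      have hAB : ((hubCliques n).induce ((S : Set (Fin n ⊕ Fin n))ᶜ)).Reachable pA pB :=
        SimpleGraph.Adj.reachable (hub_adjLR hadj)
      have key : ∀ v : ((S : Set (Fin n ⊕ Fin n))ᶜ : Set _),
          ((hubCliques n).induce ((S : Set (Fin n ⊕ Fin n))ᶜ)).Reachable v pA := by
        rintro ⟨x, hx⟩
        cases x with
        | inl a =>
          by_cases hai : a = i
          · subst hai; exact Reachable.refl _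
          · exact SimpleGraph.Adj.reachable (hub_adjLL hai)
        | inr b =>
          have hb : ((hubCliques n).induce ((S : Set (Fin n ⊕ Fin n))ᶜ)).Reachable
              ⟨Sum.inr b, hx⟩ pB := by
            by_cases hbj : b = j
            · subst hbj; exact Reachable.refl _
            · exact SimpleGraph.Adj.reachable (hub_adjRR hbj)
          exact hb.trans hAB.symm
      exact ⟨fun u v => (key u).trans (key v).symm, ⟨pA⟩⟩
end
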